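/- Let G and H be nontrivial connected graphs. Then the cycle convexity number of the strong product G ⊠ H equals the independence number of G ⊠ H: C_cc(G ⊠ H) = α(G ⊠ H). -/

import Mathlib

open SimpleGraph

variable {V α β : Type*}

/-- A set `S` is cycle convex in `G` if no vertex outside `S` lies on a cycle in the
subgraph induced by `S ∪ {w}`. -/
def CycleConvex (G : SimpleGraph V) (S : Set V) : Prop :=
  ∀ w : V, w ∉ S →
    ∀ c : (G.induce (insert w S)).Walk ⟨w, Set.mem_insert w S⟩ ⟨w, Set.mem_insert w S⟩,
      ¬ c.IsCycle

/-- The cycle convex hull of `S`: the smallest cycle convex set containing `S`. -/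
def cycleHull (G : SimpleGraph V) (S : Set V) : Set V :=
  ⋂₀ {T : Set V | S ⊆ T ∧ CycleConvex G T}

/-- The cycle hull number: minimum size of a set whose cycle convex hull is everything. -/
noncomputable def cycleHullNumber (G : SimpleGraph V) : ℕ :=
  sInf {n : ℕ | ∃ S : Set V, S.ncard = n ∧ cycleHull G S = Set.univ}

/-- The cycle convexity number: maximum size of a proper cycle convex set. -/
noncomputable def cycleConvexityNumber (G : SimpleGraph V) : ℕ :=
  sSup {n : ℕ | ∃ S : Set V, S.ncard = n ∧ CycleConvex G S ∧ S ≠ Set.univ}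

/-- The independence number of a graph. -/
noncomputable def indepNumber (G : SimpleGraph V) : ℕ :=
  sSup {n : ℕ | ∃ S : Set V, S.ncard = n ∧ S.Pairwise fun a b => ¬ G.Adj a b}

/-- The strong product of two simple graphs. -/
def strongProd (G : SimpleGraph α) (H : SimpleGraph β) : SimpleGraph (α × β) where
  Adj x y := (G.Adj x.1 y.1 ∧ x.2 = y.2) ∨ (x.1 = y.1 ∧ H.Adj x.2 y.2) ∨
    (G.Adj x.1 y.1 ∧ H.Adj x.2 y.2)
  symm := ⟨fun x y h => by
    rcases h with ⟨h1, h2⟩ | ⟨h1, h2⟩ | ⟨h1, h2⟩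
    · exact Or.inl ⟨h1.symm, h2.symm⟩
    · exact Or.inr (Or.inl ⟨h1.symm, h2.symm⟩)
    · exact Or.inr (Or.inr ⟨h1.symm, h2.symm⟩)⟩
  loopless := ⟨fun x h => by
    rcases h with ⟨h1, _⟩ | ⟨_, h2⟩ | ⟨h1, _⟩
    · exact G.ne_of_adj h1 rfl
    · exact H.ne_of_adj h2 rfl
    · exact G.ne_of_adj h1 rfl⟩

/-- The lexicographic product of two simple graphs. -/
def lexProd (G : SimpleGraph α) (H : SimpleGraph β) : SimpleGraph (α × β) where
  Adj x y := G.Adj x.1 y.1 ∨ (x.1 = y.1 ∧ H.Adj x.2 y.2)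
  symm := ⟨fun x y h => by
    rcases h with h1 | ⟨h1, h2⟩
    · exact Or.inl h1.symm
    · exact Or.inr ⟨h1.symm, h2.symm⟩⟩
  loopless := ⟨fun x h => by
    rcases h with h1 | ⟨_, h2⟩
    · exact G.ne_of_adj h1 rfl
    · exact H.ne_of_adj h2 rfl⟩


lemma indep_cycleConvex {G : SimpleGraph V} {S : Set V}
    (hS : S.Pairwise fun a b => ¬ G.Adj a b) : CycleConvex G S := by
  intro w hw c hc
  cases c with
  | nil => exact hc.ne_nil rfl
  | @cons _ v1 _ h p =>
    rw [SimpleGraph.Walk.cons_isCycle_iff] at hc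
    obtain ⟨hp, he⟩ := hc
    cases p with
    | nil => exact h.ne rfl
    | @cons _ v2 _ h2 q =>
      have hv1 : v1.val ≠ w := fun hh => h.ne (Subtype.ext hh).symm
      have hv2 : v2.val ≠ w := by
        intro hh
        apply he
        have hv : v2 = ⟨w, Set.mem_insert w S⟩ := Subtype.ext hh
        subst hv
        simp [SimpleGraph.Walk.edges_cons, Sym2.eq_swap]
      have hx : v1.val ∈ S := v1.property.resolve_left hv1
      have hy : v2.val ∈ S := v2.property.resolve_left hv2
      have hadj : G.Adj v1.val v2.val := h2
      exact hS hx hy (fun hh => hadj.ne (by exact hh)) hadj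

lemma cc_closure {G : SimpleGraph V} {S : Set V} (hS : CycleConvex G S)
    {x y w : V} (hx : x ∈ S) (hy : y ∈ S) (hxy : G.Adj x y)
    (hwx : G.Adj w x) (hwy : G.Adj w y) : w ∈ S := by
  by_contra hw
  have hxw : x ∈ insert w S := Set.mem_insert_of_mem _ hx
  have hyw : y ∈ insert w S := Set.mem_insert_of_mem _ hy
  let w0 : ↥(insert w S) := ⟨w, Set.mem_insert w S⟩
  let x0 : ↥(insert w S) := ⟨x, hxw⟩
  let y0 : ↥(insert w S) := ⟨y, hyw⟩
  have h1 : (G.induce (insert w S)).Adj w0 x0 := hwx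
  have h2 : (G.induce (insert w S)).Adj x0 y0 := hxy
  have h3 : (G.induce (insert w S)).Adj y0 w0 := hwy.symm
  refine hS w hw (Walk.cons h1 (Walk.cons h2 (Walk.cons h3 Walk.nil))) ?_
  have nwx : w0 ≠ x0 := fun hh => hwx.ne (congrArg Subtype.val hh)
  have nwy : w0 ≠ y0 := fun hh => hwy.ne (congrArg Subtype.val hh)
  have nxy : x0 ≠ y0 := fun hh => hxy.ne (congrArg Subtype.val hh)
  rw [SimpleGraph.Walk.cons_isCycle_iff]
  constructor
  · simp [Walk.isPath_def, nxy, nwy.symm, nwx.symm]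
  · simp [Sym2.eq, Sym2.rel_iff', nwx, nwy, nxy, nwx.symm, nwy.symm, nxy.symm]
    exact nwy

lemma exists_adj_of_connected {G : SimpleGraph V} [Nontrivial V] (hG : G.Connected) (a : V) :
    ∃ b, G.Adj a b := by
  obtain ⟨b, hb⟩ := exists_ne a
  obtain ⟨p⟩ := hG.preconnected a b
  cases p with
  | nil => exact (hb rfl).elim
  | cons h _ => exact ⟨_, h⟩

lemma walk_prop {G : SimpleGraph V} (P : V → Prop)
    (step : ∀ {x y : V}, G.Adj x y → P x → P y) :
    ∀ {x y : V}, G.Walk x y → P x → P y := by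
  intro x y p
  induction p with
  | nil => exact id
  | cons h p ih => exact fun hx => ih (step h hx)

lemma cc_edge_univ {G : SimpleGraph α} {H : SimpleGraph β} [Nontrivial α] [Nontrivial β]
    (hG : G.Connected) (hH : H.Connected) {S : Set (α × β)}
    (hS : CycleConvex (strongProd G H) S)
    {u v : α × β} (hu : u ∈ S) (hv : v ∈ S) (huv : (strongProd G H).Adj u v) :
    S = Set.univ := by
  obtain ⟨u1, u2⟩ := u
  obtain ⟨v1, v2⟩ := v
  obtain ⟨a, a', b, haa', h1, h2⟩ :
      ∃ a a' b, G.Adj a a' ∧ (a, b) ∈ S ∧ (a', b) ∈ S := by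
    rcases huv with ⟨hg, he⟩ | ⟨he, hh⟩ | ⟨hg, hh⟩
    · simp only at hg he
      exact ⟨u1, v1, u2, hg, hu, by rwa [he]⟩
    · simp only at he hh
      subst he
      obtain ⟨a', ha'⟩ := exists_adj_of_connected hG u1
      have hw : (a', u2) ∈ S :=
        cc_closure hS hu hv (Or.inr (Or.inl ⟨rfl, hh⟩))
          (Or.inl ⟨ha'.symm, rfl⟩) (Or.inr (Or.inr ⟨ha'.symm, hh⟩))
      exact ⟨u1, a', u2, ha', hu, hw⟩
    · simp only at hg hh
      have hw : (v1, u2) ∈ S :=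
        cc_closure hS hu hv (Or.inr (Or.inr ⟨hg, hh⟩))
          (Or.inl ⟨hg.symm, rfl⟩) (Or.inr (Or.inl ⟨rfl, hh⟩))
      exact ⟨u1, v1, u2, hg, hu, hw⟩
  have colAB : ∀ y, (a, y) ∈ S ∧ (a', y) ∈ S := by
    intro y
    obtain ⟨p⟩ := hH.preconnected b y
    refine walk_prop (fun y => (a, y) ∈ S ∧ (a', y) ∈ S) ?_ p ⟨h1, h2⟩
    rintro y z hyz ⟨hy1, hy2⟩
    have hedge : (strongProd G H).Adj (a, y) (a', y) := Or.inl ⟨haa', rfl⟩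
    constructor
    · exact cc_closure hS hy1 hy2 hedge
        (Or.inr (Or.inl ⟨rfl, hyz.symm⟩)) (Or.inr (Or.inr ⟨haa', hyz.symm⟩))
    · exact cc_closure hS hy1 hy2 hedge
        (Or.inr (Or.inr ⟨haa'.symm, hyz.symm⟩)) (Or.inr (Or.inl ⟨rfl, hyz.symm⟩))
  have colAll : ∀ c y, (c, y) ∈ S := by
    intro c
    obtain ⟨p⟩ := hG.preconnected a c
    refine walk_prop (fun c => ∀ y, (c, y) ∈ S) ?_ p (fun y => (colAB y).1)
    intro c c' hcc' hc y
    obtain ⟨y', hy'⟩ := exists_adj_of_connected hH y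
    exact cc_closure hS (hc y) (hc y') (Or.inr (Or.inl ⟨rfl, hy'⟩))
      (Or.inl ⟨hcc'.symm, rfl⟩) (Or.inr (Or.inr ⟨hcc'.symm, hy'⟩))
  ext ⟨c, y⟩
  simp [colAll]

theorem stmt_14 [Fintype α] [Fintype β] (G : SimpleGraph α) (H : SimpleGraph β)
    [Nontrivial α] [Nontrivial β] (hG : G.Connected) (hH : H.Connected) :
    cycleConvexityNumber (strongProd G H) = indepNumber (strongProd G H) := by
  classical
  have hne_univ : (∅ : Set (α × β)) ≠ Set.univ := by
    have : Nonempty (α × β) := inferInstance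
    simp [Set.eq_univ_iff_forall]
  set A := {n : ℕ | ∃ S : Set (α × β), S.ncard = n ∧ CycleConvex (strongProd G H) S ∧
    S ≠ Set.univ} with hA
  set B := {n : ℕ | ∃ S : Set (α × β), S.ncard = n ∧
    S.Pairwise fun a b => ¬ (strongProd G H).Adj a b} with hB
  have hAB : A ⊆ B := by
    rintro n ⟨S, hn, hcc, hne⟩
    refine ⟨S, hn, ?_⟩
    intro x hx y hy _ hadj
    exact hne (cc_edge_univ hG hH hcc hx hy hadj)
  have bddB : BddAbove B := by
    refine ⟨Nat.card (α × β), ?_⟩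
    rintro n ⟨S, hn, -⟩
    rw [← hn, ← Set.ncard_univ]
    exact Set.ncard_le_ncard (Set.subset_univ S) Set.finite_univ
  have bddA : BddAbove A := BddAbove.mono hAB bddB
  have neA : A.Nonempty :=
    ⟨0, ∅, by simp, indep_cycleConvex (by simp), hne_univ⟩
  have neB : B.Nonempty := ⟨0, ∅, by simp, by simp⟩
  have h1 : cycleConvexityNumber (strongProd G H) ≤ indepNumber (strongProd G H) :=
    csSup_le_csSup bddB neA hAB
  have h2 : indepNumber (strongProd G H) ≤ cycleConvexityNumber (strongProd G H) := by
    have hmem : indepNumber (strongProd G H) ∈ B := Nat.sSup_mem neB bddB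
    obtain ⟨S, hn, hind⟩ := hmem
    have hneS : S ≠ Set.univ := by
      intro h
      obtain ⟨a, b0⟩ := Classical.arbitrary (α × β)
      obtain ⟨a', ha'⟩ := exists_adj_of_connected hG a
      have hadj : (strongProd G H).Adj (a, b0) (a', b0) := Or.inl ⟨ha', rfl⟩
      have hne2 : ((a : α), b0) ≠ (a', b0) := fun hh => ha'.ne (congrArg Prod.fst hh)
      exact hind (h ▸ Set.mem_univ _) (h ▸ Set.mem_univ _) hne2 hadj
    exact le_csSup bddA ⟨S, hn, indep_cycleConvex hind, hneS⟩
  exact le_antisymm h1 h2
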